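/- If ψ : ℝ^d → ℝ is differentiable and β-absolutely homogeneous, then its Bregman divergence is β-absolutely homogeneous: D_ψ(c·w, c·w') = |c|^β D_ψ(w, w') for all c ∈ ℝ and w, w' ∈ ℝ^d. -/

import Mathlib

open RealInnerProductSpace

noncomputable def breg {d : ℕ} (f : EuclideanSpace ℝ (Fin d) → ℝ)
    (gf : EuclideanSpace ℝ (Fin d) → EuclideanSpace ℝ (Fin d))
    (x y : EuclideanSpace ℝ (Fin d)) : ℝ :=
  f x - f y - ⟪gf y, x - y⟫

/-- The Bregman divergence of a β-absolutely homogeneous potential is β-absolutely homogeneous. -/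
theorem breg_homogeneous {d : ℕ} (ψ : EuclideanSpace ℝ (Fin d) → ℝ)
    (gψ : EuclideanSpace ℝ (Fin d) → EuclideanSpace ℝ (Fin d))
    (β : ℝ) (hβ : 1 < β)
    (hψ : ∀ x, HasGradientAt ψ (gψ x) x)
    (hhomog : ∀ (c : ℝ) x, ψ (c • x) = |c| ^ β * ψ x) :
    ∀ (c : ℝ) (w w' : EuclideanSpace ℝ (Fin d)),
      breg ψ gψ (c • w) (c • w') = |c| ^ β * breg ψ gψ w w' := by
  intro c w w'
  rcases eq_or_ne c 0 with rfl | hc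
  · have hb : (0:ℝ) ^ β = 0 := Real.zero_rpow (by linarith)
    simp [breg, abs_zero, hb]
  · -- gradient homogeneity
    have key : ∀ y, c • gψ (c • y) = |c| ^ β • gψ y := by
      intro y
      have h1 : HasGradientAt (fun x => ψ (c • x)) (c • gψ (c • y)) y := by
        rw [hasGradientAt_iff_hasFDerivAt]
        have := ((hψ (c • y)).hasFDerivAt.comp y
          ((hasFDerivAt_id y).const_smul c))
        refine this.congr_fderiv ?_
        ext v
        simp [real_inner_smul_left, real_inner_smul_right, mul_comm]
      have h2 : HasGradientAt (fun x => ψ (c • x)) (|c| ^ β • gψ y) y := by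
        rw [hasGradientAt_iff_hasFDerivAt]
        have h := (hψ y).hasFDerivAt.const_smul (|c| ^ β)
        have he : (fun x => ψ (c • x)) = fun x => |c| ^ β • ψ x := by
          funext x; simpa using hhomog c x
        rw [he]
        refine h.congr_fderiv ?_
        ext v
        simp
      exact h1.unique h2
    have hinner : ⟪gψ (c • w'), c • w - c • w'⟫ = |c| ^ β * ⟪gψ w', w - w'⟫ := by
      have : c • w - c • w' = c • (w - w') := by rw [smul_sub]
      rw [this, real_inner_smul_right, ← real_inner_smul_left, key, real_inner_smul_left]
    simp only [breg, hhomog, hinner]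
    ring
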